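/- Let X = [a,b]_ℤ (with a ≤ b) with c₁-adjacency and let A = {a,b}, m ∈ ℕ. Then (X,c₁) is (A,m,m)-limited; moreover A is a minimal (m,m)-limiting set for (X,c₁) if and only if b − a > m. -/

import Mathlib

/-- A function between digital images (graphs) is digitally continuous if adjacent
points map to equal or adjacent points. -/
def DigContinuous {V W : Type*} (G : SimpleGraph V) (H : SimpleGraph W) (f : V → W) : Prop :=
  ∀ x y : V, G.Adj x y → f x = f y ∨ H.Adj (f x) (f y)

/-- `f` restricted to `A` is an `m`-map: it moves each point of `A` a graph distance of at
most `m`. -/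
def IsMMapOn {V : Type*} (G : SimpleGraph V) (f : V → V) (A : Set V) (m : ℕ) : Prop :=
  ∀ a ∈ A, G.dist a (f a) ≤ m

/-- `A` is an `(m,n)`-limiting set for `(X,κ)`: every continuous self-map whose restriction
to `A` is an `m`-map is an `n`-map. -/
def IsLimiting {V : Type*} (G : SimpleGraph V) (A : Set V) (m n : ℕ) : Prop :=
  ∀ f : V → V, DigContinuous G G f → IsMMapOn G f A m → IsMMapOn G f Set.univ n

/-- `A` is a minimal `(m,n)`-limiting set: it is limiting and no proper subset is. -/
def IsMinimalLimiting {V : Type*} (G : SimpleGraph V) (A : Set V) (m n : ℕ) : Prop :=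
  IsLimiting G A m n ∧ ∀ B : Set V, B ⊂ A → ¬ IsLimiting G B m n

/-- The digital interval `[a,b]_ℤ` with `c₁`-adjacency. -/
def intC1Icc (a b : ℤ) : SimpleGraph (Set.Icc a b) where
  Adj x y := |(x : ℤ) - (y : ℤ)| = 1
  symm := by
    constructor
    intro x y h
    rwa [abs_sub_comm]
  loopless := by
    constructor
    intro x h
    simp at h

lemma intC1Icc_adj {a b : ℤ} {x y : Set.Icc a b} :
    (intC1Icc a b).Adj x y ↔ |(x : ℤ) - (y : ℤ)| = 1 := Iff.rfl

lemma walk_exists (a b : ℤ) : ∀ n : ℕ, ∀ x y : Set.Icc a b, ((y : ℤ) - x).natAbs = n →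
    ∃ p : (intC1Icc a b).Walk x y, p.length = n := by
  intro n
  induction n with
  | zero =>
    intro x y h
    have : (x : ℤ) = y := by omega
    have hxy : x = y := Subtype.ext this
    subst hxy
    exact ⟨SimpleGraph.Walk.nil, rfl⟩
  | succ n ih =>
    intro x y h
    rcases lt_or_gt_of_ne (show (x:ℤ) ≠ y by omega) with hlt | hgt
    · have hz : (x : ℤ) + 1 ∈ Set.Icc a b := ⟨by have := x.2.1; omega, by have := y.2.2; omega⟩
      set z : Set.Icc a b := ⟨(x:ℤ)+1, hz⟩ with hzdef
      have hadj : (intC1Icc a b).Adj x z := by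
        rw [intC1Icc_adj]; simp [hzdef]
      obtain ⟨p, hp⟩ := ih z y (by simp [hzdef]; omega)
      exact ⟨SimpleGraph.Walk.cons hadj p, by simp [hp]⟩
    · have hz : (x : ℤ) - 1 ∈ Set.Icc a b := ⟨by have := y.2.1; omega, by have := x.2.2; omega⟩
      set z : Set.Icc a b := ⟨(x:ℤ)-1, hz⟩ with hzdef
      have hadj : (intC1Icc a b).Adj x z := by
        rw [intC1Icc_adj]; simp [hzdef]
      obtain ⟨p, hp⟩ := ih z y (by simp [hzdef]; omega)
      exact ⟨SimpleGraph.Walk.cons hadj p, by simp [hp]⟩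

lemma walk_lb {a b : ℤ} : ∀ {x y : Set.Icc a b} (p : (intC1Icc a b).Walk x y),
    ((x : ℤ) - y).natAbs ≤ p.length := by
  intro x y p
  induction p with
  | nil => simp
  | @cons u v w h p ih =>
    have h1 : |(u : ℤ) - v| = 1 := h
    have h2 : (u : ℤ) - v = 1 ∨ (u : ℤ) - v = -1 := by
      rcases abs_eq (by norm_num : (0:ℤ) ≤ 1) |>.mp h1 with h' | h' <;> [left; right] <;> exact h'
    simp only [SimpleGraph.Walk.length_cons]
    omega

lemma intC1Icc_dist_eq {a b : ℤ} (x y : Set.Icc a b) :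
    (intC1Icc a b).dist x y = ((x : ℤ) - y).natAbs := by
  obtain ⟨p, hp⟩ := walk_exists a b ((y:ℤ) - x).natAbs x y rfl
  have hle : (intC1Icc a b).dist x y ≤ ((x:ℤ) - y).natAbs := by
    have := SimpleGraph.dist_le p
    omega
  have hreach : (intC1Icc a b).Reachable x y := ⟨p⟩
  obtain ⟨q, hq⟩ := hreach.exists_walk_length_eq_dist
  have := walk_lb q
  omega

lemma g_mono_aux {a b : ℤ} (f : Set.Icc a b → Set.Icc a b)
    (hf : DigContinuous (intC1Icc a b) (intC1Icc a b) f) :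
    ∀ n : ℕ, ∀ x y : Set.Icc a b, (y : ℤ) - x = n →
      (f y : ℤ) - y ≤ (f x : ℤ) - x := by
  intro n
  induction n with
  | zero =>
    intro x y h
    have : x = y := Subtype.ext (by omega)
    subst this; rfl
  | succ n ih =>
    intro x y h
    have hz : (y : ℤ) - 1 ∈ Set.Icc a b := ⟨by have := x.2.1; omega, by have := y.2.2; omega⟩
    set z : Set.Icc a b := ⟨(y:ℤ) - 1, hz⟩ with hzdef
    have hadj : (intC1Icc a b).Adj z y := by
      show |(z : ℤ) - y| = 1; simp [hzdef]
    have hstep : (f y : ℤ) - (f z : ℤ) ≤ 1 := by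
      rcases hf z y hadj with h' | h'
      · rw [h']; omega
      · have : |(f z : ℤ) - (f y : ℤ)| = 1 := h'
        have := abs_le.mp this.le
        omega
    have hih := ih x z (by simp [hzdef]; omega)
    have : (z : ℤ) = (y : ℤ) - 1 := rfl
    omega

lemma g_mono {a b : ℤ} {f : Set.Icc a b → Set.Icc a b}
    (hf : DigContinuous (intC1Icc a b) (intC1Icc a b) f)
    {x y : Set.Icc a b} (hxy : (x : ℤ) ≤ y) :
    (f y : ℤ) - y ≤ (f x : ℤ) - x :=
  g_mono_aux f hf ((y : ℤ) - x).toNat x y (by omega)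

lemma limiting_Icc (a b : ℤ) (hab : a ≤ b) (m : ℕ) :
    IsLimiting (intC1Icc a b) {x : Set.Icc a b | (x : ℤ) = a ∨ (x : ℤ) = b} m m := by
  intro f hf hA x _
  set xa : Set.Icc a b := ⟨a, by simp [hab]⟩ with hxa
  set xb : Set.Icc a b := ⟨b, by simp [hab]⟩ with hxb
  have ha : (xa : ℤ) = a := rfl
  have hb : (xb : ℤ) = b := rfl
  have hda := hA xa (Or.inl ha)
  have hdb := hA xb (Or.inr hb)
  rw [intC1Icc_dist_eq] at hda hdb
  have h1 := g_mono hf (show (xa : ℤ) ≤ x from x.2.1)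
  have h2 := g_mono hf (show (x : ℤ) ≤ xb from x.2.2)
  rw [intC1Icc_dist_eq]
  omega

theorem stmt0 (a b : ℤ) (hab : a ≤ b) (m : ℕ) :
    IsLimiting (intC1Icc a b) {x : Set.Icc a b | (x : ℤ) = a ∨ (x : ℤ) = b} m m ∧
    (IsMinimalLimiting (intC1Icc a b) {x : Set.Icc a b | (x : ℤ) = a ∨ (x : ℤ) = b} m m ↔
      (m : ℤ) < b - a) := by
  set A : Set (Set.Icc a b) := {x : Set.Icc a b | (x : ℤ) = a ∨ (x : ℤ) = b} with hA
  set xa : Set.Icc a b := ⟨a, by simp [hab]⟩ with hxa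
  set xb : Set.Icc a b := ⟨b, by simp [hab]⟩ with hxb
  refine ⟨limiting_Icc a b hab m, ?_, ?_⟩
  · -- minimal → m < b - a
    intro hmin
    by_contra hle
    push_neg at hle
    -- then the empty set is limiting, contradicting minimality
    have hempty : IsLimiting (intC1Icc a b) (∅ : Set (Set.Icc a b)) m m := by
      intro f _ _ x _
      rw [intC1Icc_dist_eq]
      have h1 := x.2.1
      have h2 := x.2.2
      have h3 := (f x).2.1
      have h4 := (f x).2.2
      omega
    exact hmin.2 ∅ (Set.empty_ssubset.mpr ⟨xa, Or.inl rfl⟩) hempty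
  · -- m < b - a → minimal
    intro hlt
    refine ⟨limiting_Icc a b hab m, ?_⟩
    intro B hB hBlim
    have hBsub := hB.1
    obtain ⟨t, htA, htB⟩ := Set.exists_of_ssubset hB
    have hane : a ≠ b := by omega
    rcases htA with hta | htb
    · -- t = xa, so xa ∉ B; use constant map to xb
      have hxat : t = xa := Subtype.ext hta
      subst hxat
      have := hBlim (fun _ => xb) (fun x y _ => Or.inl rfl)
        (by
          intro u huB
          rcases hBsub huB with hu | hu
          · exact absurd (Subtype.ext hu : u = xa) (by rintro rfl; exact htB huB)
          · rw [intC1Icc_dist_eq]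
            simp [hu, hxb])
      have hbad : (intC1Icc a b).dist xa xb ≤ m := this xa (Set.mem_univ _)
      rw [intC1Icc_dist_eq] at hbad
      have e1 : (xa : ℤ) = a := rfl
      have e2 : (xb : ℤ) = b := rfl
      omega
    · -- t = xb, so xb ∉ B; use constant map to xa
      have hxbt : t = xb := Subtype.ext htb
      subst hxbt
      have := hBlim (fun _ => xa) (fun x y _ => Or.inl rfl)
        (by
          intro u huB
          rcases hBsub huB with hu | hu
          · rw [intC1Icc_dist_eq]
            simp [hu, hxa]
          · exact absurd (Subtype.ext hu : u = xb) (by rintro rfl; exact htB huB))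
      have hbad : (intC1Icc a b).dist xb xa ≤ m := this xb (Set.mem_univ _)
      rw [intC1Icc_dist_eq] at hbad
      have e1 : (xa : ℤ) = a := rfl
      have e2 : (xb : ℤ) = b := rfl
      omega
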